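/- Let Z and W be real-valued random variables defined on a common probability space whose cumulative distribution functions F_Z and F_W are continuous. Then E[F_Z(Z)·F_W(W)] ≤ 1/3, and equality holds if F_W(W) = F_Z(Z) almost surely. -/
import Mathlib

open MeasureTheory ProbabilityTheory

section Aux
open Set Filter Topology

/-- Probability integral transform: if the cdf of `ν` is continuous, then the pushforward of
`ν` under its cdf is the uniform distribution on `[0,1]`. -/
lemma aux_map_cdf (ν : Measure ℝ) [IsProbabilityMeasure ν] (hc : Continuous (cdf ν)) :
    ν.map (cdf ν) = volume.restrict (Icc 0 1) := by
  have hFmeas : Measurable (cdf ν) := hc.measurable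
  refine MeasureTheory.Measure.ext_of_Iic _ _ (fun t => ?_)
  rw [Measure.map_apply hFmeas measurableSet_Iic, Measure.restrict_apply measurableSet_Iic]
  rcases lt_or_ge t 0 with ht0 | ht0
  · have h1 : cdf ν ⁻¹' Iic t = ∅ := by
      ext x
      simp only [mem_preimage, mem_Iic, mem_empty_iff_false, iff_false, not_le]
      exact lt_of_lt_of_le ht0 (cdf_nonneg ν x)
    have h2 : Iic t ∩ Icc 0 1 = ∅ := by
      ext x
      simp only [mem_inter_iff, mem_Iic, mem_Icc, mem_empty_iff_false, iff_false]
      rintro ⟨hx, hx0, -⟩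
      linarith
    simp [h1, h2]
  rcases le_or_gt 1 t with ht1 | ht1
  · have h1 : cdf ν ⁻¹' Iic t = univ := by
      ext x
      simp only [mem_preimage, mem_Iic, mem_univ, iff_true]
      exact (cdf_le_one ν x).trans ht1
    have h2 : Iic t ∩ Icc 0 1 = Icc 0 1 := by
      rw [inter_eq_right]
      exact fun x hx => hx.2.trans ht1
    simp [h1, h2, Real.volume_Icc]
  · -- 0 ≤ t < 1
    have h2 : Iic t ∩ Icc 0 1 = Icc 0 t := by
      ext x
      simp only [mem_inter_iff, mem_Iic, mem_Icc]
      constructor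
      · rintro ⟨h, h0, -⟩; exact ⟨h0, h⟩
      · rintro ⟨h0, h⟩; exact ⟨h, h0, h.trans ht1.le⟩
    rw [h2, Real.volume_Icc]
    set S := cdf ν ⁻¹' Iic t with hSdef
    have hSclosed : IsClosed S := IsClosed.preimage hc isClosed_Iic
    -- eventually above t at top
    obtain ⟨x0, hx0⟩ := (eventually_atTop.mp ((tendsto_cdf_atTop ν).eventually
      (eventually_gt_nhds ht1)))
    rcases eq_empty_or_nonempty S with hS | hS
    · -- then t = 0
      have ht : t = 0 := by
        by_contra h
        have htpos : 0 < t := lt_of_le_of_ne ht0 (Ne.symm h)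
        obtain ⟨x, hx⟩ := ((tendsto_cdf_atBot ν).eventually
          (eventually_lt_nhds htpos)).exists
        have hxS : x ∈ S := le_of_lt hx
        rw [hS] at hxS
        exact hxS
      rw [hS, ht]
      simp
    · have hbdd : BddAbove S := by
        refine ⟨x0, fun y hy => ?_⟩
        by_contra hxy
        exact absurd (hx0 y (le_of_not_ge hxy)) (not_lt.mpr hy)
      set b := sSup S with hb
      have hbS : b ∈ S := hSclosed.csSup_mem hS hbdd
      have hSeq : S = Iic b := by
        ext x
        constructor
        · exact fun hx => le_csSup hbdd hx
        · intro hx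
          exact le_trans (monotone_cdf ν hx) hbS
      have hFb : cdf ν b = t := by
        refine le_antisymm hbS ?_
        rcases eq_or_lt_of_le ht0 with h | htpos
        · rw [← h]; exact cdf_nonneg ν b
        · -- IVT: ∃ x, cdf ν x = t
          have : t ∈ range (cdf ν) := by
            refine mem_range_of_exists_le_of_exists_ge hc ?_ ?_
            · obtain ⟨x, hx⟩ := ((tendsto_cdf_atBot ν).eventually
                (eventually_lt_nhds htpos)).exists
              exact ⟨x, hx.le⟩
            · obtain ⟨x, hx⟩ := ((tendsto_cdf_atTop ν).eventually
                (eventually_gt_nhds ht1)).exists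
              exact ⟨x, hx.le⟩
          obtain ⟨x, hx⟩ := this
          have : x ∈ S := by simp [hSdef, hx]
          calc t = cdf ν x := hx.symm
            _ ≤ cdf ν b := monotone_cdf ν (le_csSup hbdd this)
      rw [hSeq, ← ofReal_cdf, hFb, sub_zero]

lemma aux_sq_integral (ν : Measure ℝ) [IsProbabilityMeasure ν] (hc : Continuous (cdf ν)) :
    ∫ x, (cdf ν x) ^ 2 ∂ν = 1 / 3 := by
  have hFmeas : Measurable (cdf ν) := hc.measurable
  have h1 : ∫ x, (cdf ν x) ^ 2 ∂ν = ∫ y, y ^ 2 ∂(ν.map (cdf ν)) :=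
    (integral_map hFmeas.aemeasurable
      ((measurable_id.pow_const 2).aestronglyMeasurable)).symm
  rw [h1, aux_map_cdf ν hc, integral_Icc_eq_integral_Ioc,
    ← intervalIntegral.integral_of_le (by norm_num : (0:ℝ) ≤ 1), integral_pow]
  norm_num

lemma aux_sq_comp {Ω : Type*} [MeasurableSpace Ω] (μ : Measure Ω) [IsProbabilityMeasure μ]
    (Z : Ω → ℝ) (hZmeas : Measurable Z) (hZcont : Continuous (cdf (μ.map Z))) :
    ∫ ω, (cdf (μ.map Z) (Z ω)) ^ 2 ∂μ = 1 / 3 := by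
  have : IsProbabilityMeasure (μ.map Z) := Measure.isProbabilityMeasure_map hZmeas.aemeasurable
  rw [show (∫ ω, (cdf (μ.map Z) (Z ω)) ^ 2 ∂μ)
      = ∫ x, (cdf (μ.map Z) x) ^ 2 ∂(μ.map Z) from
    (integral_map hZmeas.aemeasurable
      ((hZcont.measurable.pow_const 2).aestronglyMeasurable)).symm]
  exact aux_sq_integral _ hZcont

theorem aux_main {Ω : Type*} [MeasurableSpace Ω] (μ : Measure Ω) [IsProbabilityMeasure μ]
    (Z W : Ω → ℝ) (hZmeas : Measurable Z) (hWmeas : Measurable W)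
    (hZcont : Continuous (cdf (μ.map Z))) (hWcont : Continuous (cdf (μ.map W))) :
    ∫ ω, cdf (μ.map Z) (Z ω) * cdf (μ.map W) (W ω) ∂μ ≤ 1 / 3 ∧
    ((∀ᵐ ω ∂μ, cdf (μ.map W) (W ω) = cdf (μ.map Z) (Z ω)) →
      ∫ ω, cdf (μ.map Z) (Z ω) * cdf (μ.map W) (W ω) ∂μ = 1 / 3) := by
  set F := cdf (μ.map Z)
  set G := cdf (μ.map W)
  have hFm : Measurable fun ω => F (Z ω) := hZcont.measurable.comp hZmeas
  have hGm : Measurable fun ω => G (W ω) := hWcont.measurable.comp hWmeas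
  have hintF2 : Integrable (fun ω => (F (Z ω)) ^ 2) μ := by
    refine Integrable.mono' (integrable_const 1) (hFm.pow_const 2).aestronglyMeasurable
      (ae_of_all _ fun ω => ?_)
    have h0 := cdf_nonneg (μ.map Z) (Z ω)
    have h1 := cdf_le_one (μ.map Z) (Z ω)
    rw [Real.norm_eq_abs, abs_of_nonneg (by positivity)]
    nlinarith
  have hintG2 : Integrable (fun ω => (G (W ω)) ^ 2) μ := by
    refine Integrable.mono' (integrable_const 1) (hGm.pow_const 2).aestronglyMeasurable
      (ae_of_all _ fun ω => ?_)
    have h0 := cdf_nonneg (μ.map W) (W ω)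
    have h1 := cdf_le_one (μ.map W) (W ω)
    rw [Real.norm_eq_abs, abs_of_nonneg (by positivity)]
    nlinarith
  have hintFG : Integrable (fun ω => F (Z ω) * G (W ω)) μ := by
    refine Integrable.mono' (integrable_const 1) (hFm.mul hGm).aestronglyMeasurable
      (ae_of_all _ fun ω => ?_)
    have h0 := cdf_nonneg (μ.map Z) (Z ω)
    have h1 := cdf_le_one (μ.map Z) (Z ω)
    have h2 := cdf_nonneg (μ.map W) (W ω)
    have h3 := cdf_le_one (μ.map W) (W ω)
    rw [Real.norm_eq_abs, abs_of_nonneg (by positivity)]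
    nlinarith
  have hZ3 : ∫ ω, (F (Z ω)) ^ 2 ∂μ = 1 / 3 := aux_sq_comp μ Z hZmeas hZcont
  have hW3 : ∫ ω, (G (W ω)) ^ 2 ∂μ = 1 / 3 := aux_sq_comp μ W hWmeas hWcont
  constructor
  · have hle : ∫ ω, F (Z ω) * G (W ω) ∂μ ≤
        ∫ ω, ((F (Z ω)) ^ 2 + (G (W ω)) ^ 2) / 2 ∂μ := by
      refine integral_mono hintFG ((hintF2.add hintG2).div_const 2) fun ω => ?_
      nlinarith [sq_nonneg (F (Z ω) - G (W ω))]
    calc ∫ ω, F (Z ω) * G (W ω) ∂μ ≤ _ := hle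
      _ = 1 / 3 := by
        rw [integral_div, integral_add hintF2 hintG2, hZ3, hW3]; norm_num
  · intro heq
    have : ∫ ω, F (Z ω) * G (W ω) ∂μ = ∫ ω, (F (Z ω)) ^ 2 ∂μ := by
      refine integral_congr_ae ?_
      filter_upwards [heq] with ω hω
      rw [hω]; ring
    rw [this, hZ3]

end Aux

/-- If `Z, W` are real random variables on a common probability space with continuous
cumulative distribution functions, then `E[F_Z(Z)·F_W(W)] ≤ 1/3`, with equality if
`F_W(W) = F_Z(Z)` almost surely. -/
theorem stmt_16 {Ω : Type*} [MeasurableSpace Ω] (μ : Measure Ω) [IsProbabilityMeasure μ]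
    (Z W : Ω → ℝ) (hZmeas : Measurable Z) (hWmeas : Measurable W)
    (hZcont : Continuous (cdf (μ.map Z))) (hWcont : Continuous (cdf (μ.map W))) :
    ∫ ω, cdf (μ.map Z) (Z ω) * cdf (μ.map W) (W ω) ∂μ ≤ 1 / 3 ∧
    ((∀ᵐ ω ∂μ, cdf (μ.map W) (W ω) = cdf (μ.map Z) (Z ω)) →
      ∫ ω, cdf (μ.map Z) (Z ω) * cdf (μ.map W) (W ω) ∂μ = 1 / 3) :=
  aux_main μ Z W hZmeas hWmeas hZcont hWcont
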